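/- Let R be a commutative ring such that Spec R (with the Zariski topology) is a Noetherian topological space, and let I be a proper ideal of R. Then every prime ideal of R minimal over I is an associated prime of I in the Zariski-Samuel sense, i.e. Min I ⊆ ZS(I). -/

import Mathlib

/-- For `p` minimal over `I` and `a ∈ p`, some power of `a` times an element outside `p`
lies in `I`. -/
lemma aux_pow_mul_mem_of_mem_minimalPrimes {R : Type*} [CommRing R] {I : Ideal R} {p : Ideal R}
    (hp : p ∈ I.minimalPrimes) {a : R} (ha : a ∈ p) :
    ∃ n : ℕ, ∃ s : R, s ∉ p ∧ a ^ n * s ∈ I := by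
  have hpp : p.IsPrime := hp.1.1
  by_contra hcon
  push_neg at hcon
  -- the submonoid of elements `a ^ n * s` with `s ∉ p`
  let M : Submonoid R :=
    { carrier := {x | ∃ n : ℕ, ∃ s : R, s ∉ p ∧ x = a ^ n * s}
      one_mem' := ⟨0, 1, hpp.ne_top ∘ (Ideal.eq_top_iff_one p).2, by ring⟩
      mul_mem' := by
        rintro x y ⟨n, s, hs, rfl⟩ ⟨m, t, ht, rfl⟩
        exact ⟨n + m, s * t, fun h => ((hpp.mem_or_mem h).elim hs ht), by ring⟩ }
  have hdisj : Disjoint (I : Set R) (M : Set R) := by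
    rw [Set.disjoint_left]
    rintro x hxI ⟨n, s, hs, rfl⟩
    exact hcon n s hs hxI
  obtain ⟨q, hq, hIq, hqM⟩ := Ideal.exists_le_prime_disjoint I M hdisj
  have hqp : q ≤ p := by
    intro x hx
    by_contra hxp
    exact Set.disjoint_left.mp hqM hx ⟨0, x, hxp, by ring⟩
  have : p ≤ q := hp.2 ⟨hq, hIq⟩ hqp
  exact Set.disjoint_left.mp hqM (this ha) ⟨1, 1, hpp.ne_top ∘ (Ideal.eq_top_iff_one p).2,
    by ring⟩

/-- If `Spec R` is a Noetherian topological space and `I` is a proper ideal of `R`, then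
every prime minimal over `I` is a Zariski–Samuel associated prime of `I`, i.e. it equals
the radical of the ideal quotient `(I : x)` for some `x ∈ R`. -/
theorem minimalPrimes_subset_zariskiSamuel_of_noetherianSpace {R : Type*} [CommRing R]
    [TopologicalSpace.NoetherianSpace (PrimeSpectrum R)]
    (I : Ideal R) (hI : I ≠ ⊤) (p : Ideal R) (hp : p ∈ I.minimalPrimes) :
    ∃ x : R, p = (Submodule.colon I (Ideal.span {x})).radical := by
  have hpp : p.IsPrime := hp.1.1
  have h1p : (1 : R) ∉ p := hpp.ne_top ∘ (Ideal.eq_top_iff_one p).2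
  -- the family of closed sets `V(I : s)` for `s ∉ p`
  let C : Set (TopologicalSpace.Closeds (PrimeSpectrum R)) :=
    {Z | ∃ s : R, s ∉ p ∧
      (Z : Set (PrimeSpectrum R)) = PrimeSpectrum.zeroLocus
        ((Submodule.colon I (Ideal.span {s}) : Ideal R) : Set R)}
  have hCne : C.Nonempty :=
    ⟨⟨_, PrimeSpectrum.isClosed_zeroLocus _⟩, 1, h1p, rfl⟩
  obtain ⟨Z₀, hZ₀C, hZ₀min⟩ :=
    (wellFounded_lt (α := TopologicalSpace.Closeds (PrimeSpectrum R))).has_min C hCne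
  obtain ⟨x, hxp, hZ₀⟩ := hZ₀C
  -- directedness + minimality: `V(I : x) ⊆ V(I : s)` for every `s ∉ p`
  have key : ∀ s : R, s ∉ p →
      (Z₀ : Set (PrimeSpectrum R)) ⊆ PrimeSpectrum.zeroLocus
        ((Submodule.colon I (Ideal.span {s}) : Ideal R) : Set R) := by
    intro s hs
    have hxs : x * s ∉ p := fun h => (hpp.mem_or_mem h).elim hxp hs
    have hle1 : Submodule.colon I (Ideal.span {x}) ≤ Submodule.colon I (Ideal.span {x * s}) := by
      intro r hr
      rw [Ideal.mem_colon_span_singleton] at hr ⊢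
      rw [show r * (x * s) = r * x * s by ring]
      exact I.mul_mem_right s hr
    have hle2 : Submodule.colon I (Ideal.span {s}) ≤ Submodule.colon I (Ideal.span {x * s}) := by
      intro r hr
      rw [Ideal.mem_colon_span_singleton] at hr ⊢
      rw [show r * (x * s) = r * s * x by ring]
      exact I.mul_mem_right x hr
    set Zxs : TopologicalSpace.Closeds (PrimeSpectrum R) :=
      ⟨_, PrimeSpectrum.isClosed_zeroLocus
        ((Submodule.colon I (Ideal.span {x * s}) : Ideal R) : Set R)⟩ with hZxs
    have hsub : Zxs ≤ Z₀ := by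
      show (Zxs : Set (PrimeSpectrum R)) ⊆ (Z₀ : Set (PrimeSpectrum R))
      rw [hZ₀]
      exact PrimeSpectrum.zeroLocus_anti_mono (by exact_mod_cast hle1)
    have heq : Zxs = Z₀ := by
      by_contra hne
      exact hZ₀min Zxs ⟨x * s, hxs, rfl⟩ (lt_of_le_of_ne hsub hne)
    intro q hq
    rw [← heq] at hq
    exact PrimeSpectrum.zeroLocus_anti_mono (by exact_mod_cast hle2) hq
  refine ⟨x, le_antisymm ?_ ?_⟩
  · -- p ≤ radical (I : x)
    intro a ha
    rw [Ideal.radical_eq_sInf]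
    refine Ideal.mem_sInf.mpr ?_
    rintro q ⟨hq1, hq2⟩
    obtain ⟨n, s, hs, hns⟩ := aux_pow_mul_mem_of_mem_minimalPrimes hp ha
    have hqZ : (⟨q, hq2⟩ : PrimeSpectrum R) ∈ (Z₀ : Set (PrimeSpectrum R)) := by
      rw [hZ₀]
      exact (PrimeSpectrum.mem_zeroLocus _ _).mpr hq1
    have := key s hs hqZ
    rw [PrimeSpectrum.mem_zeroLocus] at this
    have han : a ^ n ∈ q := this (Ideal.mem_colon_span_singleton.mpr hns)
    exact hq2.mem_of_pow_mem n han
  · -- radical (I : x) ≤ p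
    have hcol : Submodule.colon I (Ideal.span {x}) ≤ p := by
      intro r hr
      rw [Ideal.mem_colon_span_singleton] at hr
      exact (hpp.mem_or_mem (hp.1.2 hr)).resolve_right hxp
    calc (Submodule.colon I (Ideal.span {x})).radical ≤ p.radical := Ideal.radical_mono hcol
      _ = p := hpp.radical
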